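/- Strong necessitation for K4_h: if ⋀_{i=1}^{k} □_{m_i} A_i ⊢_{K4_h} A and m_i ≤ n for all i (and n > r(A)), then ⋀_{i=1}^{k} □_{m_i} A_i ⊢_{K4_h} □n A. -/

import Mathlib

/-- Poly-modal formulas with modalities `□n` for `n : ℕ`. -/
inductive Fm : Type
  | atom : ℕ → Fm
  | bot  : Fm
  | and  : Fm → Fm → Fm
  | or   : Fm → Fm → Fm
  | imp  : Fm → Fm → Fm
  | neg  : Fm → Fm
  | box  : ℕ → Fm → Fm
  deriving DecidableEq

def Fm.top : Fm := Fm.neg Fm.bot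

/-- `i` occurs as a modality index in the formula. -/
def occursBox (i : ℕ) : Fm → Prop
  | .atom _ => False
  | .bot => False
  | .and A B => occursBox i A ∨ occursBox i B
  | .or A B => occursBox i A ∨ occursBox i B
  | .imp A B => occursBox i A ∨ occursBox i B
  | .neg A => occursBox i A
  | .box n A => i = n ∨ occursBox i A

/-- `n` is strictly greater than every modality index occurring in `A`
    (the paper's "`n > r(A)`"). -/
def BoxLt (A : Fm) (n : ℕ) : Prop := ∀ i, occursBox i A → i < n

/-- The language `L∞`: each box index strictly exceeds all box indices in its scope. -/
inductive Linf : Fm → Prop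
  | atom (k : ℕ) : Linf (.atom k)
  | bot : Linf .bot
  | and {A B : Fm} : Linf A → Linf B → Linf (.and A B)
  | or {A B : Fm} : Linf A → Linf B → Linf (.or A B)
  | imp {A B : Fm} : Linf A → Linf B → Linf (.imp A B)
  | neg {A : Fm} : Linf A → Linf (.neg A)
  | box {A : Fm} (n : ℕ) : Linf A → BoxLt A n → Linf (.box n A)

/-- Boolean evaluation treating atoms and boxed formulas as propositional atoms. -/
def evalWith (v : Fm → Bool) : Fm → Bool
  | .atom k => v (.atom k)
  | .bot => false
  | .and A B => evalWith v A && evalWith v B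
  | .or A B => evalWith v A || evalWith v B
  | .imp A B => !(evalWith v A) || evalWith v B
  | .neg A => !(evalWith v A)
  | .box n A => v (.box n A)

/-- Classical propositional tautologies (on `L∞`-formulas as atoms). -/
def Taut (A : Fm) : Prop := ∀ v, evalWith v A = true

def axH (F : Fm) : Prop := ∃ A n, Linf (Fm.box n A) ∧ F = (Fm.box n A).imp (Fm.box (n+1) A)
def axK (F : Fm) : Prop := ∃ A B n, Linf (Fm.box n (A.imp B)) ∧
    F = (Fm.box n (A.imp B)).imp ((Fm.box n A).imp (Fm.box n B))
def axFour (F : Fm) : Prop := ∃ A n, Linf (Fm.box n A) ∧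
    F = (Fm.box n A).imp (Fm.box (n+1) (Fm.box n A))
def axD (F : Fm) : Prop := ∃ n, F = Fm.neg (Fm.box n Fm.bot)
def axT (F : Fm) : Prop := ∃ A n, Linf (Fm.box n A) ∧ F = (Fm.box n A).imp A
def axL (F : Fm) : Prop := ∃ A n, Linf (Fm.box n A) ∧
    F = (Fm.box (n+1) ((Fm.box n A).imp A)).imp (Fm.box n A)
def axFive (F : Fm) : Prop := ∃ A n, Linf (Fm.box n A) ∧
    F = ((Fm.box n A).neg).imp (Fm.box (n+1) ((Fm.box n A).neg))

/-- Hilbert-style provability over `L∞` from a set of axiom (schema instances):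
    classical tautologies, modus ponens, and necessitation restricted to `n > r(A)`. -/
inductive Prv (Ax : Fm → Prop) : Fm → Prop
  | ax {A : Fm} : Ax A → Prv Ax A
  | taut {A : Fm} : Linf A → Taut A → Prv Ax A
  | mp {A B : Fm} : Prv Ax (A.imp B) → Prv Ax A → Prv Ax B
  | nec {A : Fm} (n : ℕ) : Prv Ax A → BoxLt A n → Prv Ax (Fm.box n A)

def K4hAx (F : Fm) : Prop := axH F ∨ axK F ∨ axFour F
def KD4hAx (F : Fm) : Prop := K4hAx F ∨ axD F
def S4hAx (F : Fm) : Prop := K4hAx F ∨ axT F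
def GLhAx (F : Fm) : Prop := K4hAx F ∨ axL F
def KD45hAx (F : Fm) : Prop := KD4hAx F ∨ axFive F

def K4h : Fm → Prop := Prv K4hAx
def KD4h : Fm → Prop := Prv KD4hAx
def S4h : Fm → Prop := Prv S4hAx
def GLh : Fm → Prop := Prv GLhAx

def conjList (l : List Fm) : Fm := l.foldr Fm.and Fm.top
def disjList (l : List Fm) : Fm := l.foldr Fm.or Fm.bot

/-- `Γ ⊢_L A` : some finite conjunction of members of `Γ` implies `A` in `L`. -/
def Deriv (Ax : Fm → Prop) (Γ : Set Fm) (A : Fm) : Prop :=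
  ∃ l : List Fm, (∀ B ∈ l, B ∈ Γ) ∧ Prv Ax ((conjList l).imp A)

/- ## Auxiliary development -/

section Aux

lemma linf_top : Linf Fm.top := Linf.neg Linf.bot

lemma boxLt_top (n : ℕ) : BoxLt Fm.top n := by
  intro i hi
  simp [Fm.top, occursBox] at hi

lemma boxLt_mono {A : Fm} {m n : ℕ} (h : BoxLt A m) (hmn : m ≤ n) : BoxLt A n :=
  fun i hi => lt_of_lt_of_le (h i hi) hmn

lemma boxLt_and {A B : Fm} {n : ℕ} (hA : BoxLt A n) (hB : BoxLt B n) :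
    BoxLt (Fm.and A B) n := by
  intro i hi
  rcases hi with h | h
  · exact hA i h
  · exact hB i h

lemma boxLt_imp {A B : Fm} {n : ℕ} (hA : BoxLt A n) (hB : BoxLt B n) :
    BoxLt (Fm.imp A B) n := by
  intro i hi
  rcases hi with h | h
  · exact hA i h
  · exact hB i h

lemma boxLt_box {A : Fm} {m n : ℕ} (hmn : m < n) (hA : BoxLt A n) :
    BoxLt (Fm.box m A) n := by
  intro i hi
  rcases hi with rfl | h
  · exact hmn
  · exact hA i h

/-- Tautology helpers. -/
lemma taut_id (A : Fm) : Taut (A.imp A) := by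
  intro v; simp [evalWith]

lemma taut_top : Taut Fm.top := by
  intro v; simp [Fm.top, evalWith]

lemma taut_imp_top (A : Fm) : Taut (A.imp Fm.top) := by
  intro v; simp [Fm.top, evalWith]

lemma taut_k (A B : Fm) : Taut (A.imp (B.imp A)) := by
  intro v; simp only [evalWith]
  cases evalWith v A <;> cases evalWith v B <;> rfl

lemma taut_trans (A B C : Fm) : Taut ((A.imp B).imp ((B.imp C).imp (A.imp C))) := by
  intro v; simp only [evalWith]
  cases evalWith v A <;> cases evalWith v B <;> cases evalWith v C <;> rfl

lemma taut_pair (A B : Fm) : Taut (A.imp (B.imp (A.and B))) := by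
  intro v; simp only [evalWith]
  cases evalWith v A <;> cases evalWith v B <;> rfl

lemma taut_combine (U V x y z : Fm) :
    Taut ((U.imp x).imp ((V.imp y).imp ((x.imp (y.imp z)).imp ((U.and V).imp z)))) := by
  intro v; simp only [evalWith]
  cases evalWith v U <;> cases evalWith v V <;> cases evalWith v x <;>
    cases evalWith v y <;> cases evalWith v z <;> rfl

lemma taut_and_left (A B : Fm) : Taut ((A.and B).imp A) := by
  intro v; simp only [evalWith]
  cases evalWith v A <;> cases evalWith v B <;> rfl

/-- `Prv` toolkit. -/
lemma prv_top {Ax : Fm → Prop} : Prv Ax Fm.top :=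
  Prv.taut linf_top taut_top

lemma prv_imp_trans {Ax : Fm → Prop} {A B C : Fm}
    (hA : Linf A) (hB : Linf B) (hC : Linf C)
    (h1 : Prv Ax (A.imp B)) (h2 : Prv Ax (B.imp C)) : Prv Ax (A.imp C) :=
  Prv.mp (Prv.mp (Prv.taut
    (Linf.imp (Linf.imp hA hB) (Linf.imp (Linf.imp hB hC) (Linf.imp hA hC)))
    (taut_trans A B C)) h1) h2

lemma prv_weaken {Ax : Fm → Prop} {A B : Fm}
    (hA : Linf A) (hB : Linf B) (h : Prv Ax A) : Prv Ax (B.imp A) :=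
  Prv.mp (Prv.taut (Linf.imp hA (Linf.imp hB hA)) (taut_k A B)) h

/-- The translation killing boxes of index `≥ n`. -/
def tr (n : ℕ) : Fm → Fm
  | .atom k => .atom k
  | .bot => .bot
  | .and A B => .and (tr n A) (tr n B)
  | .or A B => .or (tr n A) (tr n B)
  | .imp A B => .imp (tr n A) (tr n B)
  | .neg A => .neg (tr n A)
  | .box k A => if n ≤ k then Fm.top else .box k (tr n A)

lemma tr_eq_of_boxLt {A : Fm} {n : ℕ} (h : BoxLt A n) : tr n A = A := by
  induction A with
  | atom k => rfl
  | bot => rfl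
  | and A B ihA ihB =>
      have hA : BoxLt A n := fun i hi => h i (Or.inl hi)
      have hB : BoxLt B n := fun i hi => h i (Or.inr hi)
      simp [tr, ihA hA, ihB hB]
  | or A B ihA ihB =>
      have hA : BoxLt A n := fun i hi => h i (Or.inl hi)
      have hB : BoxLt B n := fun i hi => h i (Or.inr hi)
      simp [tr, ihA hA, ihB hB]
  | imp A B ihA ihB =>
      have hA : BoxLt A n := fun i hi => h i (Or.inl hi)
      have hB : BoxLt B n := fun i hi => h i (Or.inr hi)
      simp [tr, ihA hA, ihB hB]
  | neg A ihA =>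
      have hA : BoxLt A n := fun i hi => h i hi
      simp [tr, ihA hA]
  | box k A ihA =>
      have hk : k < n := h k (Or.inl rfl)
      have hA : BoxLt A n := fun i hi => h i (Or.inr hi)
      simp [tr, Nat.not_le.mpr hk, ihA hA]

lemma occursBox_tr {i n : ℕ} {A : Fm} (h : occursBox i (tr n A)) : occursBox i A := by
  induction A with
  | atom k => exact h
  | bot => exact h
  | and A B ihA ihB =>
      rcases h with h | h
      · exact Or.inl (ihA h)
      · exact Or.inr (ihB h)
  | or A B ihA ihB =>
      rcases h with h | h
      · exact Or.inl (ihA h)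
      · exact Or.inr (ihB h)
  | imp A B ihA ihB =>
      rcases h with h | h
      · exact Or.inl (ihA h)
      · exact Or.inr (ihB h)
  | neg A ihA => exact ihA h
  | box k A ihA =>
      by_cases hk : n ≤ k
      · simp [tr, hk, Fm.top, occursBox] at h
      · simp only [tr, if_neg hk] at h
        rcases h with rfl | h
        · exact Or.inl rfl
        · exact Or.inr (ihA h)

lemma linf_tr {A : Fm} (h : Linf A) (n : ℕ) : Linf (tr n A) := by
  induction h with
  | atom k => exact Linf.atom k
  | bot => exact Linf.bot
  | and hA hB ihA ihB => exact Linf.and ihA ihB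
  | or hA hB ihA ihB => exact Linf.or ihA ihB
  | imp hA hB ihA ihB => exact Linf.imp ihA ihB
  | neg hA ihA => exact Linf.neg ihA
  | box k hA hlt ihA =>
      by_cases hk : n ≤ k
      · simpa [tr, hk] using linf_top
      · simp only [tr, if_neg hk]
        exact Linf.box k ihA (fun i hi => hlt i (occursBox_tr hi))

lemma boxLt_tr {A : Fm} (h : Linf A) (n : ℕ) : BoxLt (tr n A) n := by
  induction h with
  | atom k => intro i hi; simp [tr, occursBox] at hi
  | bot => intro i hi; simp [tr, occursBox] at hi
  | and hA hB ihA ihB => exact boxLt_and ihA ihB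
  | or hA hB ihA ihB =>
      intro i hi
      rcases hi with hi | hi
      · exact ihA i hi
      · exact ihB i hi
  | imp hA hB ihA ihB => exact boxLt_imp ihA ihB
  | neg hA ihA => exact fun i hi => ihA i hi
  | box k hA hlt ihA =>
      by_cases hk : n ≤ k
      · simpa [tr, hk] using boxLt_top n
      · simp only [tr, if_neg hk]
        exact boxLt_box (Nat.not_le.mp hk) ihA

lemma evalWith_tr (v : Fm → Bool) (n : ℕ) (A : Fm) :
    evalWith v (tr n A) = evalWith (fun F => evalWith v (tr n F)) A := by
  induction A with
  | atom k => rfl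
  | bot => rfl
  | and A B ihA ihB => simp [tr, evalWith, ihA, ihB]
  | or A B ihA ihB => simp [tr, evalWith, ihA, ihB]
  | imp A B ihA ihB => simp [tr, evalWith, ihA, ihB]
  | neg A ihA => simp [tr, evalWith, ihA]
  | box k A ihA => rfl

lemma taut_tr {A : Fm} (h : Taut A) (n : ℕ) : Taut (tr n A) := by
  intro v
  rw [evalWith_tr]
  exact h _

/-- Provability is preserved by the translation (for `K4h`). -/
lemma prv_tr {G : Fm} (h : Prv K4hAx G) (n : ℕ) : Prv K4hAx (tr n G) := by
  induction h with
  | @ax F hF =>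
      rcases hF with ⟨B, k, hL, rfl⟩ | ⟨B, C, k, hL, rfl⟩ | ⟨B, k, hL, rfl⟩
      · -- axH
        rcases hL with - | - | - | - | - | - | @⟨B, k, hB, hlt⟩
        by_cases hk : n ≤ k
        · have hk1 : n ≤ k + 1 := le_trans hk (Nat.le_succ k)
          simp only [tr, if_pos hk, if_pos hk1]
          exact Prv.taut (Linf.imp linf_top linf_top) (taut_imp_top _)
        · have hkn : k < n := Nat.not_le.mp hk
          have hBn : tr n B = B := tr_eq_of_boxLt (boxLt_mono hlt (le_of_lt hkn))
          by_cases hk1 : n ≤ k + 1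
          · simp only [tr, if_neg hk, if_pos hk1, hBn]
            exact Prv.taut (Linf.imp (Linf.box k hB hlt) linf_top) (taut_imp_top _)
          · simp only [tr, if_neg hk, if_neg hk1, hBn]
            exact Prv.ax (Or.inl ⟨B, k, Linf.box k hB hlt, rfl⟩)
      · -- axK
        rcases hL with - | - | - | - | - | - | @⟨BC, k, hBC, hlt⟩
        by_cases hk : n ≤ k
        · simp only [tr, if_pos hk]
          refine Prv.taut (Linf.imp linf_top (Linf.imp linf_top linf_top)) ?_
          intro v; simp [Fm.top, evalWith]
        · have hkn : k < n := Nat.not_le.mp hk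
          have hB : tr n B = B :=
            tr_eq_of_boxLt (fun i hi => lt_trans (hlt i (Or.inl hi)) hkn)
          have hC : tr n C = C :=
            tr_eq_of_boxLt (fun i hi => lt_trans (hlt i (Or.inr hi)) hkn)
          simp only [tr, if_neg hk, hB, hC]
          exact Prv.ax (Or.inr (Or.inl ⟨B, C, k, Linf.box k hBC hlt, rfl⟩))
      · -- axFour
        rcases hL with - | - | - | - | - | - | @⟨B, k, hB, hlt⟩
        by_cases hk : n ≤ k
        · have hk1 : n ≤ k + 1 := le_trans hk (Nat.le_succ k)
          simp only [tr, if_pos hk, if_pos hk1]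
          exact Prv.taut (Linf.imp linf_top linf_top) (taut_imp_top _)
        · have hkn : k < n := Nat.not_le.mp hk
          have hBn : tr n B = B := tr_eq_of_boxLt (boxLt_mono hlt (le_of_lt hkn))
          by_cases hk1 : n ≤ k + 1
          · simp only [tr, if_neg hk, if_pos hk1, hBn]
            exact Prv.taut (Linf.imp (Linf.box k hB hlt) linf_top) (taut_imp_top _)
          · simp only [tr, if_neg hk, if_neg hk1, hBn]
            exact Prv.ax (Or.inr (Or.inr ⟨B, k, Linf.box k hB hlt, rfl⟩))
  | taut hL hT => exact Prv.taut (linf_tr hL n) (taut_tr hT n)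
  | mp h1 h2 ih1 ih2 => exact Prv.mp ih1 ih2
  | @nec B k h hlt ih =>
      by_cases hk : n ≤ k
      · simpa [tr, hk] using (prv_top : Prv K4hAx Fm.top)
      · have hkn : k < n := Nat.not_le.mp hk
        have hB : tr n B = B := tr_eq_of_boxLt (boxLt_mono hlt (le_of_lt hkn))
        simp only [tr, if_neg hk, hB]
        exact Prv.nec k h hlt

end Aux

lemma prv_boxLift {B : Fm} {m : ℕ} (hB : Linf B) (hlt : BoxLt B m) :
    ∀ n, m < n → Prv K4hAx ((Fm.box m B).imp (Fm.box n (Fm.box m B))) := by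
  intro n
  induction n with
  | zero => intro h; exact absurd h (Nat.not_lt_zero m)
  | succ n ih =>
      intro h
      rcases Nat.lt_or_ge m n with hmn | hge
      · have hBn : BoxLt (Fm.box m B) n := boxLt_box hmn (boxLt_mono hlt (le_of_lt hmn))
        have hLn : Linf (Fm.box n (Fm.box m B)) := Linf.box n (Linf.box m hB hlt) hBn
        have hax : Prv K4hAx ((Fm.box n (Fm.box m B)).imp (Fm.box (n+1) (Fm.box m B))) :=
          Prv.ax (Or.inl ⟨Fm.box m B, n, hLn, rfl⟩)
        exact prv_imp_trans (Linf.box m hB hlt) hLn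
          (Linf.box (n+1) (Linf.box m hB hlt) (boxLt_mono hBn (Nat.le_succ n)))
          (ih hmn) hax
      · have hmeq : m = n := le_antisymm (Nat.lt_succ_iff.mp h) hge
        subst hmeq
        exact Prv.ax (Or.inr (Or.inr ⟨B, m, Linf.box m hB hlt, rfl⟩))

lemma prv_box_pair {X Y : Fm} {n : ℕ} (hX : Linf X) (hY : Linf Y)
    (hXn : BoxLt X n) (hYn : BoxLt Y n) :
    Prv K4hAx ((Fm.box n X).imp ((Fm.box n Y).imp (Fm.box n (X.and Y)))) := by
  have hXY : Linf (X.imp (Y.imp (X.and Y))) :=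
    Linf.imp hX (Linf.imp hY (Linf.and hX hY))
  have hXYn : BoxLt (X.imp (Y.imp (X.and Y))) n :=
    boxLt_imp hXn (boxLt_imp hYn (boxLt_and hXn hYn))
  have t1 : Prv K4hAx (Fm.box n (X.imp (Y.imp (X.and Y)))) :=
    Prv.nec n (Prv.taut hXY (taut_pair X Y)) hXYn
  have k1 : Prv K4hAx ((Fm.box n (X.imp (Y.imp (X.and Y)))).imp
      ((Fm.box n X).imp (Fm.box n (Y.imp (X.and Y))))) :=
    Prv.ax (Or.inr (Or.inl ⟨X, Y.imp (X.and Y), n, Linf.box n hXY hXYn, rfl⟩))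
  have p1 : Prv K4hAx ((Fm.box n X).imp (Fm.box n (Y.imp (X.and Y)))) := Prv.mp k1 t1
  have k2 : Prv K4hAx ((Fm.box n (Y.imp (X.and Y))).imp
      ((Fm.box n Y).imp (Fm.box n (X.and Y)))) :=
    Prv.ax (Or.inr (Or.inl ⟨Y, X.and Y, n,
      Linf.box n (Linf.imp hY (Linf.and hX hY)) (boxLt_imp hYn (boxLt_and hXn hYn)), rfl⟩))
  exact prv_imp_trans (Linf.box n hX hXn)
    (Linf.box n (Linf.imp hY (Linf.and hX hY)) (boxLt_imp hYn (boxLt_and hXn hYn)))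
    (Linf.imp (Linf.box n hY hYn) (Linf.box n (Linf.and hX hY) (boxLt_and hXn hYn)))
    p1 k2

lemma prv_combine {U V X Y : Fm} {n : ℕ}
    (hU : Linf U) (hV : Linf V) (hX : Linf X) (hY : Linf Y)
    (hXn : BoxLt X n) (hYn : BoxLt Y n)
    (h1 : Prv K4hAx (U.imp (Fm.box n X))) (h2 : Prv K4hAx (V.imp (Fm.box n Y))) :
    Prv K4hAx ((U.and V).imp (Fm.box n (X.and Y))) := by
  have bx : Linf (Fm.box n X) := Linf.box n hX hXn
  have by' : Linf (Fm.box n Y) := Linf.box n hY hYn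
  have bz : Linf (Fm.box n (X.and Y)) := Linf.box n (Linf.and hX hY) (boxLt_and hXn hYn)
  have tt : Prv K4hAx (((U.imp (Fm.box n X)).imp ((V.imp (Fm.box n Y)).imp
      (((Fm.box n X).imp ((Fm.box n Y).imp (Fm.box n (X.and Y)))).imp
        ((U.and V).imp (Fm.box n (X.and Y))))))) :=
    Prv.taut (Linf.imp (Linf.imp hU bx) (Linf.imp (Linf.imp hV by')
      (Linf.imp (Linf.imp bx (Linf.imp by' bz)) (Linf.imp (Linf.and hU hV) bz))))
      (taut_combine U V _ _ _)
  exact Prv.mp (Prv.mp (Prv.mp tt h1) h2) (prv_box_pair hX hY hXn hYn)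

lemma linf_conjList {l : List Fm} (h : ∀ B ∈ l, Linf B) : Linf (conjList l) := by
  induction l with
  | nil => exact linf_top
  | cons B l ih =>
      exact Linf.and (h B (List.mem_cons_self))
        (ih fun C hC => h C (List.mem_cons_of_mem _ hC))

lemma taut_conj_self {l : List Fm} {C : Fm} (h : ∀ B ∈ l, B = C) :
    Taut (C.imp (conjList l)) := by
  induction l with
  | nil => intro v; simp [conjList, Fm.top, evalWith]
  | cons B l ih =>
      obtain rfl := h B (List.mem_cons_self)
      have ihv := ih (fun D hD => h D (List.mem_cons_of_mem _ hD))
      intro v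
      have hv := ihv v
      show evalWith v (B.imp (B.and (conjList l))) = true
      simp only [evalWith] at hv ⊢
      cases hc : evalWith v B <;> simp_all

lemma conj_box_lift (n : ℕ) : ∀ (L : List (ℕ × Fm)),
    (∀ p ∈ L, Linf (Fm.box p.1 p.2)) → (∀ p ∈ L, p.1 ≤ n) →
    Prv K4hAx ((conjList (L.map fun p => Fm.box p.1 p.2)).imp
      (Fm.box n (tr n (conjList (L.map fun p => Fm.box p.1 p.2))))) := by
  intro L
  induction L with
  | nil =>
      intro _ _
      exact prv_weaken (Linf.box n linf_top (boxLt_top n)) linf_top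
        (Prv.nec n prv_top (boxLt_top n))
  | cons p L ih =>
      intro hL hm
      obtain ⟨m, B⟩ := p
      have hLmB : Linf (Fm.box m B) := hL (m, B) (List.mem_cons_self)
      have hmB : m ≤ n := hm (m, B) (List.mem_cons_self)
      have hL' : ∀ q ∈ L, Linf (Fm.box q.1 q.2) := fun q hq => hL q (List.mem_cons_of_mem _ hq)
      have hm' : ∀ q ∈ L, q.1 ≤ n := fun q hq => hm q (List.mem_cons_of_mem _ hq)
      have ih' := ih hL' hm'
      have hrest : Linf (conjList (L.map fun p => Fm.box p.1 p.2)) := by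
        refine linf_conjList ?_
        intro F hF
        obtain ⟨q, hq, rfl⟩ := List.mem_map.mp hF
        exact hL' q hq
      have hq1 : Prv K4hAx ((Fm.box m B).imp (Fm.box n (tr n (Fm.box m B)))) := by
        rcases lt_or_eq_of_le hmB with hlt | heq
        · rcases hLmB with - | - | - | - | - | - | @⟨B, m, hB, hBm⟩
          have : tr n (Fm.box m B) = Fm.box m B :=
            tr_eq_of_boxLt (boxLt_box hlt (boxLt_mono hBm (le_of_lt hlt)))
          rw [this]
          exact prv_boxLift hB hBm n hlt
        · have hle : n ≤ m := le_of_eq heq.symm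
          have : tr n (Fm.box m B) = Fm.top := by simp [tr, hle]
          rw [this]
          exact prv_weaken (Linf.box n linf_top (boxLt_top n)) hLmB
            (Prv.nec n prv_top (boxLt_top n))
      exact prv_combine hLmB hrest (linf_tr hLmB n) (linf_tr hrest n)
        (boxLt_tr hLmB n) (boxLt_tr hrest n) hq1 ih'
/-- strong necessitation for `K4_h`. -/
theorem K4h_strong_necessitation (L : List (ℕ × Fm)) (n : ℕ) (A : Fm)
    (hL : ∀ p ∈ L, Linf (Fm.box p.1 p.2))
    (hm : ∀ p ∈ L, p.1 ≤ n)
    (hA : Linf A) (hn : BoxLt A n)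
    (h : Deriv K4hAx {conjList (L.map fun p => Fm.box p.1 p.2)} A) :
    Deriv K4hAx {conjList (L.map fun p => Fm.box p.1 p.2)} (Fm.box n A) := by
  classical
  set C : Fm := conjList (L.map fun p => Fm.box p.1 p.2) with hCdef
  have hC : Linf C := by
    refine linf_conjList ?_
    intro F hF
    obtain ⟨q, hq, rfl⟩ := List.mem_map.mp hF
    exact hL q hq
  obtain ⟨l, hl, hp⟩ := h
  have hlC : ∀ B ∈ l, B = C := fun B hB => hl B hB
  have hCl : Linf (conjList l) := linf_conjList (fun B hB => (hlC B hB) ▸ hC)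
  have s1 : Prv K4hAx (C.imp A) :=
    prv_imp_trans hC hCl hA
      (Prv.taut (Linf.imp hC hCl) (taut_conj_self hlC)) hp
  have hbltC : BoxLt (tr n C) n := boxLt_tr hC n
  have hLtrC : Linf (tr n C) := linf_tr hC n
  have s2 : Prv K4hAx ((tr n C).imp A) := by
    have h2 := prv_tr s1 n
    simpa [tr, tr_eq_of_boxLt hn] using h2
  have s3 : Prv K4hAx (Fm.box n ((tr n C).imp A)) :=
    Prv.nec n s2 (boxLt_imp hbltC hn)
  have s4 : Prv K4hAx ((Fm.box n (tr n C)).imp (Fm.box n A)) :=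
    Prv.mp (Prv.ax (Or.inr (Or.inl ⟨tr n C, A, n,
      Linf.box n (Linf.imp hLtrC hA) (boxLt_imp hbltC hn), rfl⟩))) s3
  have s5 : Prv K4hAx (C.imp (Fm.box n (tr n C))) := conj_box_lift n L hL hm
  have s6 : Prv K4hAx (C.imp (Fm.box n A)) :=
    prv_imp_trans hC (Linf.box n hLtrC hbltC) (Linf.box n hA hn) s5 s4
  refine ⟨[C], by simp, ?_⟩
  show Prv K4hAx ((C.and Fm.top).imp (Fm.box n A))
  exact prv_imp_trans (Linf.and hC linf_top) hC (Linf.box n hA hn)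
    (Prv.taut (Linf.imp (Linf.and hC linf_top) hC) (taut_and_left C Fm.top)) s6
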